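/- Let K ≥ 1, let h_1,…,h_K > 0, σ² > 0 and P > 0 be real numbers. Then the infimum over g ∈ ℝ and b ∈ ℝ^K with ∑_{k=1}^K b_k² ≤ P of ∑_{k=1}^K (g h_k b_k − 1)² + σ² g² equals the infimum over t ∈ ℝ^K of ∑_{k=1}^K (h_k t_k − 1)² + (σ²/P) ∑_{k=1}^K t_k². That is, the sum-power-constrained MSE minimization problem is equivalent, after the substitution t_k = g b_k, to the unconstrained convex problem. -/

import Mathlib

/-- The sum-power-constrained MSE minimization problem is equivalent,
after the substitution `t k = g * b k`, to the unconstrained convex problem: the infimum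
over `g, b` with `∑ k (b k)² ≤ P` of `∑ k (g h k b k − 1)² + σ² g²` equals the infimum
over `t` of `∑ k (h k t k − 1)² + (σ²/P) ∑ k (t k)²`. -/
theorem aircomp_sum_power_problem_equiv (K : ℕ) (hK : 1 ≤ K) (h : Fin K → ℝ)
    (hh : ∀ k, 0 < h k) (σ2 P : ℝ) (hσ2 : 0 < σ2) (hP : 0 < P) :
    sInf {m : ℝ | ∃ (g : ℝ) (b : Fin K → ℝ), (∑ k, b k ^ 2) ≤ P ∧
        m = (∑ k, (g * h k * b k - 1) ^ 2) + σ2 * g ^ 2}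
      = sInf {m : ℝ | ∃ t : Fin K → ℝ,
        m = (∑ k, (h k * t k - 1) ^ 2) + σ2 / P * ∑ k, t k ^ 2} := by
  set S := {m : ℝ | ∃ (g : ℝ) (b : Fin K → ℝ), (∑ k, b k ^ 2) ≤ P ∧
        m = (∑ k, (g * h k * b k - 1) ^ 2) + σ2 * g ^ 2} with hSdef
  set T := {m : ℝ | ∃ t : Fin K → ℝ,
        m = (∑ k, (h k * t k - 1) ^ 2) + σ2 / P * ∑ k, t k ^ 2} with hTdef
  have hSbdd : BddBelow S := by
    refine ⟨0, ?_⟩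
    rintro m ⟨g, b, hb, rfl⟩
    positivity
  have hTbdd : BddBelow T := by
    refine ⟨0, ?_⟩
    rintro m ⟨t, rfl⟩
    positivity
  have hSne : S.Nonempty := ⟨_, 0, 0, by simpa using hP.le, rfl⟩
  have hTne : T.Nonempty := ⟨_, 0, rfl⟩
  apply le_antisymm
  · -- sInf S ≤ sInf T : show T ⊆ S
    apply csInf_le_csInf hSbdd hTne
    rintro m ⟨t, rfl⟩
    by_cases ht : (∑ k, t k ^ 2) = 0
    · have htk : ∀ k, t k = 0 := by
        intro k
        have := (Finset.sum_eq_zero_iff_of_nonneg (fun k _ => sq_nonneg (t k))).1 ht k (Finset.mem_univ k)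
        exact pow_eq_zero_iff (two_ne_zero) |>.1 this
      refine ⟨0, 0, by simpa using hP.le, ?_⟩
      simp [htk, ht]
    · have hS0 : 0 < ∑ k, t k ^ 2 :=
        lt_of_le_of_ne (by positivity) (Ne.symm ht)
      set g : ℝ := Real.sqrt ((∑ k, t k ^ 2) / P) with hgdef
      have hg : 0 < g := Real.sqrt_pos.2 (by positivity)
      have hg2 : g ^ 2 = (∑ k, t k ^ 2) / P := Real.sq_sqrt (by positivity)
      refine ⟨g, fun k => t k / g, ?_, ?_⟩
      · have : ∑ k, (t k / g) ^ 2 = (∑ k, t k ^ 2) / g ^ 2 := by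
          rw [Finset.sum_div]
          exact Finset.sum_congr rfl fun k _ => div_pow _ _ _
        rw [this, hg2]
        have : (∑ k, t k ^ 2) / ((∑ k, t k ^ 2) / P) = P := by
          field_simp
        rw [this]
      · have h1 : ∀ k, g * h k * (t k / g) = h k * t k := by
          intro k; field_simp
        have h2 : σ2 * g ^ 2 = σ2 / P * ∑ k, t k ^ 2 := by
          rw [hg2]; field_simp
        rw [h2]
        congr 1
        exact Finset.sum_congr rfl fun k _ => by rw [h1 k]
  · -- sInf T ≤ sInf S
    apply le_csInf hSne
    rintro m ⟨g, b, hb, rfl⟩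
    refine csInf_le_of_le hTbdd ⟨fun k => g * b k, rfl⟩ ?_
    have e1 : ∑ k, (h k * (g * b k) - 1) ^ 2 = ∑ k, (g * h k * b k - 1) ^ 2 :=
      Finset.sum_congr rfl fun k _ => by ring_nf
    have e2 : σ2 / P * ∑ k, (g * b k) ^ 2 ≤ σ2 * g ^ 2 := by
      have : ∑ k, (g * b k) ^ 2 = g ^ 2 * ∑ k, b k ^ 2 := by
        rw [Finset.mul_sum]
        exact Finset.sum_congr rfl fun k _ => by ring
      rw [this]
      calc σ2 / P * (g ^ 2 * ∑ k, b k ^ 2) ≤ σ2 / P * (g ^ 2 * P) := by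
            apply mul_le_mul_of_nonneg_left _ (by positivity)
            exact mul_le_mul_of_nonneg_left hb (by positivity)
        _ = σ2 * g ^ 2 := by field_simp
      
    rw [e1]
    exact add_le_add le_rfl e2
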